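/- Let u be a positive integer. The linear fractional transformation L_u(z) = z/(uz+1) maps D_n \ D_{n+1} bijectively onto D_{n+1} \ D_{n+2} for every integer n ≥ 0; that is, the image of D_n \ D_{n+1} under L_u equals D_{n+1} \ D_{n+2}. -/

import Mathlib

def D0 : Set ℂ := {z : ℂ | 0 < z.re ∧ 0 < z.im}

def Dn (u n : ℕ) : Set ℂ :=
  {z ∈ D0 | (n : ℝ) * (u : ℝ) * (z.re ^ 2 + z.im ^ 2) < z.re}

lemma mem_Dn {u n : ℕ} {z : ℂ} :
    z ∈ Dn u n ↔ (0 < z.re ∧ 0 < z.im) ∧ (n : ℝ) * u * (z.re ^ 2 + z.im ^ 2) < z.re :=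
  Iff.rfl

lemma den_ne (t : ℝ) (ht : t ≠ 0) {z : ℂ} (hz : z.im ≠ 0) : (t : ℂ) * z + 1 ≠ 0 := by
  intro h
  have h2 := congrArg Complex.im h
  simp [Complex.add_im, Complex.mul_im] at h2
  rcases h2 with h2 | h2 <;> simp_all

lemma normSq_den (t : ℝ) (z : ℂ) :
    Complex.normSq ((t : ℂ) * z + 1) = (t * z.re + 1) ^ 2 + (t * z.im) ^ 2 := by
  simp [Complex.normSq_apply, Complex.add_re, Complex.add_im, Complex.mul_re, Complex.mul_im]
  ring

lemma re_div (t : ℝ) (z : ℂ) :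
    (z / ((t : ℂ) * z + 1)).re
      = (t * (z.re ^ 2 + z.im ^ 2) + z.re) / ((t * z.re + 1) ^ 2 + (t * z.im) ^ 2) := by
  rw [Complex.div_re, normSq_den, ← add_div]
  congr 1
  simp [Complex.add_re, Complex.add_im, Complex.mul_re, Complex.mul_im]
  ring

lemma im_div (t : ℝ) (z : ℂ) :
    (z / ((t : ℂ) * z + 1)).im = z.im / ((t * z.re + 1) ^ 2 + (t * z.im) ^ 2) := by
  rw [Complex.div_im, normSq_den, div_sub_div_same]
  congr 1
  simp [Complex.add_re, Complex.add_im, Complex.mul_re, Complex.mul_im]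
  ring

lemma sq_div (t : ℝ) (z : ℂ) :
    (z / ((t : ℂ) * z + 1)).re ^ 2 + (z / ((t : ℂ) * z + 1)).im ^ 2
      = (z.re ^ 2 + z.im ^ 2) / ((t * z.re + 1) ^ 2 + (t * z.im) ^ 2) := by
  rcases eq_or_ne ((t * z.re + 1) ^ 2 + (t * z.im) ^ 2) 0 with h | h
  · rw [re_div, im_div, h]
    simp
  · rw [re_div, im_div, div_pow, div_pow, ← add_div,
      div_eq_div_iff (pow_ne_zero 2 h) h]
    ring

lemma den_ne' (u : ℕ) (hu : 0 < u) {z : ℂ} (hz : z.im ≠ 0) : (u : ℂ) * z + 1 ≠ 0 := by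
  have h := den_ne (u : ℝ) (by exact_mod_cast hu.ne') hz
  push_cast at h
  exact h

lemma f_mem (u : ℕ) (hu : 0 < u) {z : ℂ} (hz : z ∈ D0) (m : ℕ) :
    z / ((u : ℂ) * z + 1) ∈ D0 ∧
    (z / ((u : ℂ) * z + 1) ∈ Dn u (m + 1) ↔ z ∈ Dn u m) := by
  obtain ⟨hx, hy⟩ := hz
  have hu1 : (1 : ℝ) ≤ (u : ℝ) := by exact_mod_cast hu
  have hc : ((u : ℕ) : ℂ) = (((u : ℕ) : ℝ) : ℂ) := by push_cast; ring
  have hN : 0 < ((u : ℝ) * z.re + 1) ^ 2 + ((u : ℝ) * z.im) ^ 2 := by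
    have h3 : 0 < (u : ℝ) * z.im := by nlinarith
    nlinarith [sq_nonneg ((u : ℝ) * z.re + 1)]
  have hre : (z / ((u : ℂ) * z + 1)).re
      = ((u : ℝ) * (z.re ^ 2 + z.im ^ 2) + z.re)
        / (((u : ℝ) * z.re + 1) ^ 2 + ((u : ℝ) * z.im) ^ 2) := by
    rw [hc]; exact re_div (u : ℝ) z
  have him : (z / ((u : ℂ) * z + 1)).im
      = z.im / (((u : ℝ) * z.re + 1) ^ 2 + ((u : ℝ) * z.im) ^ 2) := by
    rw [hc]; exact im_div (u : ℝ) z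
  have hsq : (z / ((u : ℂ) * z + 1)).re ^ 2 + (z / ((u : ℂ) * z + 1)).im ^ 2
      = (z.re ^ 2 + z.im ^ 2) / (((u : ℝ) * z.re + 1) ^ 2 + ((u : ℝ) * z.im) ^ 2) := by
    rw [hc]; exact sq_div (u : ℝ) z
  have hD0 : z / ((u : ℂ) * z + 1) ∈ D0 := by
    refine ⟨?_, ?_⟩
    · rw [hre]; exact div_pos (by positivity) hN
    · rw [him]; exact div_pos hy hN
  refine ⟨hD0, ?_⟩
  rw [mem_Dn, mem_Dn, hsq, hre, him]
  constructor
  · rintro ⟨-, h⟩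
    refine ⟨⟨hx, hy⟩, ?_⟩
    rw [← mul_div_assoc, div_lt_div_iff₀ hN hN] at h
    push_cast at h ⊢
    nlinarith
  · rintro ⟨-, h⟩
    refine ⟨⟨div_pos (by positivity) hN, div_pos hy hN⟩, ?_⟩
    rw [← mul_div_assoc, div_lt_div_iff₀ hN hN]
    push_cast at h ⊢
    nlinarith

theorem Lu_maps_crescent_onto (u : ℕ) (hu : 0 < u) (n : ℕ) :
    Set.InjOn (fun z : ℂ => z / ((u : ℂ) * z + 1)) (Dn u n \ Dn u (n + 1)) ∧
    (fun z : ℂ => z / ((u : ℂ) * z + 1)) '' (Dn u n \ Dn u (n + 1))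
      = Dn u (n + 1) \ Dn u (n + 2) := by
  constructor
  · intro z1 h1 z2 h2 hf
    simp only at hf
    have d1 : (u : ℂ) * z1 + 1 ≠ 0 := den_ne' u hu (ne_of_gt (mem_Dn.1 h1.1).1.2)
    have d2 : (u : ℂ) * z2 + 1 ≠ 0 := den_ne' u hu (ne_of_gt (mem_Dn.1 h2.1).1.2)
    rw [div_eq_div_iff d1 d2] at hf
    linear_combination hf
  · ext w
    simp only [Set.mem_image, Set.mem_diff]
    constructor
    · rintro ⟨z, ⟨hz1, hz2⟩, rfl⟩
      have hzD0 : z ∈ D0 := ⟨(mem_Dn.1 hz1).1.1, (mem_Dn.1 hz1).1.2⟩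
      exact ⟨(f_mem u hu hzD0 n).2.mpr hz1,
        fun hc => hz2 ((f_mem u hu hzD0 (n + 1)).2.mp hc)⟩
    · rintro ⟨hw1, hw2⟩
      obtain ⟨⟨hx, hy⟩, h1⟩ := mem_Dn.1 hw1
      have hu1 : (1 : ℝ) ≤ (u : ℝ) := by exact_mod_cast hu
      push_cast at h1
      have hs : 0 < w.re ^ 2 + w.im ^ 2 := by positivity
      have h2 : ¬ ((n : ℝ) + 2) * (u : ℝ) * (w.re ^ 2 + w.im ^ 2) < w.re := by
        intro hc
        exact hw2 (mem_Dn.2 ⟨⟨hx, hy⟩, by push_cast; exact hc⟩)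
      push_neg at h2
      -- the inverse point
      set t : ℝ := -(u : ℝ) with ht
      set z : ℂ := w / ((t : ℂ) * w + 1) with hzdef
      have hM : 0 < (t * w.re + 1) ^ 2 + (t * w.im) ^ 2 := by
        have htneg : t < 0 := by rw [ht]; linarith
        have hty : t * w.im < 0 := mul_neg_of_neg_of_pos htneg hy
        nlinarith [sq_nonneg (t * w.re + 1), mul_pos_of_neg_of_neg hty hty]
      have husx : (u : ℝ) * (w.re ^ 2 + w.im ^ 2) < w.re := by nlinarith
      have hzre : z.re = (t * (w.re ^ 2 + w.im ^ 2) + w.re)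
          / ((t * w.re + 1) ^ 2 + (t * w.im) ^ 2) := re_div t w
      have hzim : z.im = w.im / ((t * w.re + 1) ^ 2 + (t * w.im) ^ 2) := im_div t w
      have hzsq : z.re ^ 2 + z.im ^ 2 = (w.re ^ 2 + w.im ^ 2)
          / ((t * w.re + 1) ^ 2 + (t * w.im) ^ 2) := sq_div t w
      have hzre0 : 0 < z.re := by
        rw [hzre]; apply div_pos _ hM; rw [ht]; nlinarith
      have hzim0 : 0 < z.im := by rw [hzim]; exact div_pos hy hM
      have hM' : 0 < (-(u : ℝ) * w.re + 1) ^ 2 + (-(u : ℝ) * w.im) ^ 2 := by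
        rw [← ht]; exact hM
      refine ⟨z, ⟨?_, ?_⟩, ?_⟩
      · refine mem_Dn.2 ⟨⟨hzre0, hzim0⟩, ?_⟩
        push_cast
        rw [hzsq, hzre, ← mul_div_assoc, div_lt_div_iff₀ hM hM, ht]
        nlinarith [mul_pos (show (0:ℝ) < w.re - ((n:ℝ)+1)*(u:ℝ)*(w.re^2+w.im^2) by linarith) hM']
      · intro hc
        obtain ⟨-, hc⟩ := mem_Dn.1 hc
        push_cast at hc
        rw [hzsq, hzre, ← mul_div_assoc, div_lt_div_iff₀ hM hM, ht] at hc
        nlinarith [mul_nonneg (show (0:ℝ) ≤ ((n:ℝ)+2)*(u:ℝ)*(w.re^2+w.im^2) - w.re by linarith) hM'.le]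
      · have hd1 : (t : ℂ) * w + 1 ≠ 0 := den_ne t (by rw [ht]; intro hc; nlinarith [neg_eq_zero.1 hc]) (ne_of_gt hy)
        have hd2 : (u : ℂ) * z + 1 ≠ 0 := den_ne' u hu (ne_of_gt hzim0)
        show z / ((u : ℂ) * z + 1) = w
        rw [div_eq_iff hd2, hzdef]
        field_simp
        push_cast [ht]
        have h3 : (1 - w * (u:ℂ)) ≠ 0 := by
          rw [ht] at hd1; push_cast at hd1; intro h; apply hd1; linear_combination h
        linear_combination w * mul_inv_cancel₀ h3
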